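/- Let p be a prime, n ≥ 1, and let k_1,…,k_r ∈ ℕ^n∖{0} be ℝ-linearly independent vectors. Let δ = {λ_1 k_1 + ⋯ + λ_r k_r : λ_j ∈ ℝ, λ_j > 0 for all j}, and let M : ℝ^n → ℝ be a linear form with M(k_j) > 0 for j = 1,…,r. Then the series Σ_{k ∈ ℕ^n ∩ δ} p^{−M(k)} converges and equals (Σ_h p^{M(h)}) / Π_{j=1}^{r} (p^{M(k_j)} − 1), where h runs through the finite set ℤ^n ∩ {λ_1 k_1 + ⋯ + λ_r k_r : 0 ≤ λ_j < 1 for j = 1,…,r}. -/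

import Mathlib

lemma hasSum_mul_pair {ι κ : Type*} {f : ι → ℝ} {g : κ → ℝ} {s t : ℝ}
    (hf : HasSum f s) (hg : HasSum g t) :
    HasSum (fun x : ι × κ => f x.1 * g x.2) (s * t) := by
  refine hf.mul hg ?_
  have : Summable fun x : ι × κ => ‖f x.1‖ * ‖g x.2‖ :=
    (hf.summable.abs).mul_of_nonneg (hg.summable.abs) (fun _ => abs_nonneg _)
      (fun _ => abs_nonneg _) |>.congr (by intro x; simp [Real.norm_eq_abs])
  exact this.of_norm_bounded (by intro x; simp [Real.norm_eq_abs, abs_mul, abs_abs, le_refl])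

lemma hasSum_pi_prod {r : ℕ} (f : Fin r → ℕ → ℝ) (S : Fin r → ℝ)
    (h : ∀ j, HasSum (f j) (S j)) :
    HasSum (fun m : Fin r → ℕ => ∏ j, f j (m j)) (∏ j, S j) := by
  induction r with
  | zero =>
      have : HasSum (fun m : Fin 0 → ℕ => ∏ j, f j (m j)) (∑ m : Fin 0 → ℕ, ∏ j, f j (m j)) :=
        hasSum_fintype _
      simpa using this
  | succ r ih =>
      have key : HasSum (fun x : ℕ × (Fin r → ℕ) => f 0 x.1 * ∏ j : Fin r, f j.succ (x.2 j))
          (S 0 * ∏ j : Fin r, S j.succ) :=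
        hasSum_mul_pair (f := f 0) (g := fun m : Fin r → ℕ => ∏ j : Fin r, f j.succ (m j))
          (h 0) (ih (fun j => f j.succ) (fun j => S j.succ) (fun j => h j.succ))
      have key2 := (((Fin.consEquiv fun _ : Fin (r+1) => ℕ).symm).hasSum_iff).mpr key
      rw [Fin.prod_univ_succ]
      simpa [Function.comp, Fin.prod_univ_succ, Function.comp_def, Fin.consEquiv, Fin.tail] using key2

lemma geom_real (p a : ℝ) (hp : 1 < p) (ha : 0 < a) :
    HasSum (fun m : ℕ => p ^ (-(((m : ℝ) + 1) * a))) (1 / (p ^ a - 1)) := by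
  have hp0 : 0 < p := lt_trans one_pos hp
  have hb : (1:ℝ) < p ^ a := Real.one_lt_rpow_iff_of_pos hp0 |>.mpr (Or.inl ⟨hp, ha⟩)
  have hlt : p ^ (-a) < 1 := by
    rw [Real.rpow_neg hp0.le, inv_lt_one_iff₀]; right; exact hb
  have hge : 0 ≤ p ^ (-a) := Real.rpow_nonneg hp0.le _
  have hg2 := (hasSum_geometric_of_lt_one hge hlt).mul_left (p ^ (-a))
  have heq : (fun m : ℕ => p ^ (-a) * (p ^ (-a)) ^ m) =
      fun m : ℕ => p ^ (-(((m : ℝ) + 1) * a)) := by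
    funext m
    have h1 : (-(((m:ℝ)+1) * a)) = (-a) * (((m+1 : ℕ) : ℝ)) := by push_cast; ring
    rw [h1, Real.rpow_mul hp0.le, Real.rpow_natCast, pow_succ]
    ring
  rw [heq] at hg2
  convert hg2 using 1
  · rfl
  have h1 : p ^ a ≠ 0 := ne_of_gt (Real.rpow_pos_of_pos hp0 a)
  have h2 : p ^ a - 1 ≠ 0 := by linarith
  rw [Real.rpow_neg hp0.le]
  have h3 : 1 - (p ^ a)⁻¹ = (p ^ a - 1) / (p ^ a) := by field_simp
  rw [h3]
  field_simp

lemma rpow_finset_sum (p : ℝ) (hp : 0 < p) {ι : Type*} (s : Finset ι) (c : ι → ℝ) :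
    p ^ (∑ j ∈ s, c j) = ∏ j ∈ s, p ^ c j := by
  classical
  induction s using Finset.induction with
  | empty => simp
  | insert _ _ hx ih => rw [Finset.sum_insert hx, Finset.prod_insert hx, Real.rpow_add hp, ih]

/-- Embedding of `ℕ^n` into `ℝ^n`. -/
def toRn {n : ℕ} (k : Fin n → ℕ) : Fin n → ℝ := fun i => (k i : ℝ)

set_option maxHeartbeats 1000000 in
theorem cone_series_rational (p : ℝ) (hp : 1 < p) (n : ℕ) (hn : 1 ≤ n) (r : ℕ)
    (k : Fin r → (Fin n → ℕ)) (hknz : ∀ j, k j ≠ 0)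
    (hli : LinearIndependent ℝ (fun j => toRn (k j)))
    (M : (Fin n → ℝ) →ₗ[ℝ] ℝ) (hM : ∀ j, 0 < M (toRn (k j)))
    (δ : Set (Fin n → ℝ))
    (hδ : δ = {x | ∃ lam : Fin r → ℝ, (∀ j, 0 < lam j) ∧ x = ∑ j, lam j • toRn (k j)})
    (H : Set (Fin n → ℤ))
    (hH : H = {h | ∃ lam : Fin r → ℝ, (∀ j, 0 ≤ lam j ∧ lam j < 1) ∧
      (fun i => (h i : ℝ)) = ∑ j, lam j • toRn (k j)}) :
    H.Finite ∧
    HasSum (fun k' : {k' : Fin n → ℕ // toRn k' ∈ δ} => p ^ (-(M (toRn k'.1))))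
      ((∑' h : H, p ^ (M (fun i => ((h : Fin n → ℤ) i : ℝ)))) /
        ∏ j, (p ^ (M (toRn (k j))) - 1)) := by
  classical
  have hp0 : (0:ℝ) < p := lt_trans one_pos hp
  have hδ' : ∀ x : Fin n → ℝ, x ∈ δ ↔
      ∃ lam : Fin r → ℝ, (∀ j, 0 < lam j) ∧ x = ∑ j, lam j • toRn (k j) := by
    intro x; rw [hδ]; exact Iff.rfl
  have hH' : ∀ h : Fin n → ℤ, h ∈ H ↔
      ∃ lam : Fin r → ℝ, (∀ j, 0 ≤ lam j ∧ lam j < 1) ∧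
        (fun i => (h i : ℝ)) = ∑ j, lam j • toRn (k j) := by
    intro h; rw [hH]; exact Iff.rfl
  -- coefficient extraction from linear independence
  have hcoef : ∀ c d : Fin r → ℝ,
      (∑ j, c j • toRn (k j)) = (∑ j, d j • toRn (k j)) → c = d := by
    intro c d hcd
    have h0 : ∑ j, (c j - d j) • toRn (k j) = 0 := by
      simp only [sub_smul, Finset.sum_sub_distrib, hcd, sub_self]
    have hz := Fintype.linearIndependent_iff.mp hli (fun j => c j - d j) h0
    funext j
    have hzz : c j - d j = 0 := hz j
    linarith
  -- coordinates of a linear combination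
  have hrepc : ∀ (c : Fin r → ℝ) (i : Fin n),
      (∑ j, c j • toRn (k j)) i = ∑ j, c j * (k j i : ℝ) := by
    intro c i
    simp [Finset.sum_apply, toRn]
  -- finiteness of H
  have hHfin : H.Finite := by
    have hsub : H ⊆ Set.pi Set.univ (fun i => Set.Icc (0:ℤ) (∑ j, (k j i : ℤ))) := by
      intro h hh
      obtain ⟨lam, hlam, hrep⟩ := (hH' h).mp hh
      intro i _
      have hre : (h i : ℝ) = ∑ j, lam j * (k j i : ℝ) := by
        have := congrFun hrep i
        simpa [hrepc] using this
      constructor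
      · have h1 : (0:ℝ) ≤ (h i : ℝ) := by
          rw [hre]
          exact Finset.sum_nonneg fun j _ => mul_nonneg (hlam j).1 (Nat.cast_nonneg _)
        exact_mod_cast h1
      · have h2 : (h i : ℝ) ≤ ((∑ j, (k j i : ℤ) : ℤ) : ℝ) := by
          rw [hre]
          push_cast
          apply Finset.sum_le_sum
          intro j _
          nlinarith [(hlam j).1, (hlam j).2, Nat.cast_nonneg (α := ℝ) (k j i)]
        exact_mod_cast h2
    exact (Set.Finite.pi fun i => Set.finite_Icc _ _).subset hsub
  refine ⟨hHfin, ?_⟩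
  -- membership witnesses
  have hx1 : ∀ x : ↥H, ∃ mu : Fin r → ℝ, (∀ j, 0 ≤ mu j ∧ mu j < 1) ∧
      (fun i => ((x : Fin n → ℤ) i : ℝ)) = ∑ j, mu j • toRn (k j) :=
    fun x => (hH' _).mp x.2
  -- the forward map on data
  set F : (↥H × (Fin r → ℕ)) → (Fin n → ℕ) :=
    fun x i => ((∑ j, ((x.2 j : ℤ) + 1) * (k j i : ℤ)) - (x.1 : Fin n → ℤ) i).toNat with hFdef
  have hZnn : ∀ (x : ↥H × (Fin r → ℕ)) (i : Fin n),
      0 ≤ (∑ j, ((x.2 j : ℤ) + 1) * (k j i : ℤ)) - (x.1 : Fin n → ℤ) i := by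
    intro x i
    obtain ⟨mu, hmu, hrep⟩ := hx1 x.1
    have hhi : ((x.1 : Fin n → ℤ) i : ℝ) = ∑ j, mu j * (k j i : ℝ) := by
      have := congrFun hrep i
      simpa [hrepc] using this
    have key : (0:ℝ) ≤ (((∑ j, ((x.2 j : ℤ) + 1) * (k j i : ℤ)) - (x.1 : Fin n → ℤ) i : ℤ) : ℝ) := by
      push_cast
      rw [hhi, ← Finset.sum_sub_distrib]
      apply Finset.sum_nonneg
      intro j _
      have h1 : mu j ≤ (x.2 j : ℝ) + 1 := by
        have := (hmu j).2
        nlinarith [Nat.cast_nonneg (α := ℝ) (x.2 j)]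
      have h2 : (0:ℝ) ≤ (k j i : ℝ) := Nat.cast_nonneg _
      nlinarith
    exact_mod_cast key
  have hFint : ∀ (x : ↥H × (Fin r → ℕ)) (i : Fin n),
      ((F x i : ℤ)) = (∑ j, ((x.2 j : ℤ) + 1) * (k j i : ℤ)) - (x.1 : Fin n → ℤ) i :=
    fun x i => Int.toNat_of_nonneg (hZnn x i)
  have hFreal : ∀ (x : ↥H × (Fin r → ℕ)) (i : Fin n),
      ((F x i : ℝ)) = (∑ j, ((x.2 j : ℝ) + 1) * (k j i : ℝ)) - ((x.1 : Fin n → ℤ) i : ℝ) := by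
    intro x i
    have h1 : ((F x i : ℤ) : ℝ) =
        (((∑ j, ((x.2 j : ℤ) + 1) * (k j i : ℤ)) - (x.1 : Fin n → ℤ) i : ℤ) : ℝ) := by
      exact_mod_cast congrArg (fun z : ℤ => (z : ℝ)) (hFint x i)
    push_cast at h1
    exact_mod_cast h1
  have hFvec : ∀ x : ↥H × (Fin r → ℕ), toRn (F x) =
      (∑ j, ((x.2 j : ℝ) + 1) • toRn (k j)) - (fun i => ((x.1 : Fin n → ℤ) i : ℝ)) := by
    intro x; funext i
    simp only [toRn, Pi.sub_apply, hrepc]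
    exact hFreal x i
  have hFvec' : ∀ (x : ↥H × (Fin r → ℕ)) (mu : Fin r → ℝ),
      ((fun i => ((x.1 : Fin n → ℤ) i : ℝ)) = ∑ j, mu j • toRn (k j)) →
      toRn (F x) = ∑ j, ((x.2 j : ℝ) + 1 - mu j) • toRn (k j) := by
    intro x mu hrep
    rw [hFvec x, hrep, ← Finset.sum_sub_distrib]
    apply Finset.sum_congr rfl
    intro j _
    rw [sub_smul]
  have hFδ : ∀ x : ↥H × (Fin r → ℕ), toRn (F x) ∈ δ := by
    intro x
    obtain ⟨mu, hmu, hrep⟩ := hx1 x.1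
    rw [hδ' _]
    refine ⟨fun j => (x.2 j : ℝ) + 1 - mu j, fun j => ?_, hFvec' x mu hrep⟩
    show (0:ℝ) < (x.2 j : ℝ) + 1 - mu j
    have := (hmu j).2
    nlinarith [Nat.cast_nonneg (α := ℝ) (x.2 j)]
  set e0 : (↥H × (Fin r → ℕ)) → {k' : Fin n → ℕ // toRn k' ∈ δ} :=
    fun x => ⟨F x, hFδ x⟩ with he0def
  have hinj : Function.Injective e0 := by
    intro x y hxy
    have hF : F x = F y := congrArg Subtype.val hxy
    obtain ⟨mux, hmux, hrepx⟩ := hx1 x.1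
    obtain ⟨muy, hmuy, hrepy⟩ := hx1 y.1
    have hcd : (fun j => (x.2 j : ℝ) + 1 - mux j) = (fun j => (y.2 j : ℝ) + 1 - muy j) := by
      apply hcoef
      rw [← hFvec' x mux hrepx, ← hFvec' y muy hrepy, hF]
    have hm : x.2 = y.2 := by
      funext j
      have hj := congrFun hcd j
      have hd : |((x.2 j : ℤ) - (y.2 j : ℤ))| < 1 := by
        have h1 : (((x.2 j : ℤ) - (y.2 j : ℤ) : ℤ) : ℝ) = mux j - muy j := by
          push_cast; linarith
        have hreal : |(((x.2 j : ℤ) - (y.2 j : ℤ) : ℤ) : ℝ)| < 1 := by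
          rw [h1, abs_lt]
          constructor
          · linarith [(hmux j).1, (hmuy j).2]
          · linarith [(hmux j).2, (hmuy j).1]
        exact_mod_cast hreal
      have : (x.2 j : ℤ) = (y.2 j : ℤ) := by rw [abs_lt] at hd; omega
      exact_mod_cast this
    have hh : (x.1 : Fin n → ℤ) = (y.1 : Fin n → ℤ) := by
      funext i
      have h1 := hFint x i
      have h2 := hFint y i
      rw [hF, hm] at h1
      linarith [h1, h2]
    exact Prod.ext (Subtype.ext hh) hm
  have hsurj : Function.Surjective e0 := by
    rintro ⟨k', hk'⟩
    obtain ⟨lam, hlam, hrep⟩ := (hδ' _).mp hk'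
    set m : Fin r → ℕ := fun j => (⌈lam j⌉ - 1).toNat with hmdef
    have hm1 : ∀ j, ((m j : ℤ)) = ⌈lam j⌉ - 1 := by
      intro j
      have h1 : (1:ℤ) ≤ ⌈lam j⌉ := Int.ceil_pos.mpr (hlam j)
      rw [hmdef]
      simp only
      rw [Int.toNat_of_nonneg (by omega)]
    have hmr : ∀ j, ((m j : ℝ)) + 1 = (⌈lam j⌉ : ℝ) := by
      intro j
      have h1 : ((m j : ℤ) : ℝ) = ((⌈lam j⌉ - 1 : ℤ) : ℝ) :=
        congrArg (fun z : ℤ => (z : ℝ)) (hm1 j)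
      push_cast at h1
      linarith
    have hk'c : ∀ i, (k' i : ℝ) = ∑ j, lam j * (k j i : ℝ) := by
      intro i
      have := congrFun hrep i
      simpa [toRn, hrepc] using this
    set hInt : Fin n → ℤ := fun i => (∑ j, ((m j : ℤ) + 1) * (k j i : ℤ)) - (k' i : ℤ) with hhdef
    have hhr : ∀ i, ((hInt i : ℝ)) = ∑ j, ((m j : ℝ) + 1 - lam j) * (k j i : ℝ) := by
      intro i
      rw [hhdef]
      push_cast
      rw [hk'c i, ← Finset.sum_sub_distrib]
      apply Finset.sum_congr rfl
      intro j _
      ring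
    have hmemH : hInt ∈ H := by
      rw [hH' _]
      refine ⟨fun j => (m j : ℝ) + 1 - lam j, fun j => ?_, ?_⟩
      · refine ⟨?_, ?_⟩
        · have ha1 := Int.le_ceil (lam j)
          have ha2 := hmr j
          show (0:ℝ) ≤ (m j : ℝ) + 1 - lam j
          linarith
        · have ha1 := Int.ceil_lt_add_one (lam j)
          have ha2 := hmr j
          show (m j : ℝ) + 1 - lam j < 1
          linarith
      · funext i
        rw [hrepc]
        exact hhr i
    refine ⟨⟨⟨hInt, hmemH⟩, m⟩, ?_⟩
    apply Subtype.ext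
    funext i
    have h1 := hFint (⟨⟨hInt, hmemH⟩, m⟩ : ↥H × (Fin r → ℕ)) i
    have h2 : (∑ j, ((m j : ℤ) + 1) * (k j i : ℤ)) - hInt i = (k' i : ℤ) := by
      rw [hhdef]; ring
    rw [h2] at h1
    simp only [he0def]
    exact_mod_cast h1
  -- the two component sums
  haveI : Finite ↥H := hHfin.to_subtype
  have hG : HasSum (fun h : ↥H => p ^ (M (fun i => ((h : Fin n → ℤ) i : ℝ))))
      (∑' h : ↥H, p ^ (M (fun i => ((h : Fin n → ℤ) i : ℝ)))) :=
    Summable.of_finite.hasSum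
  have hW : HasSum (fun mm : Fin r → ℕ => ∏ j, p ^ (-(((mm j : ℝ) + 1) * M (toRn (k j)))))
      (∏ j, 1 / (p ^ (M (toRn (k j))) - 1)) :=
    hasSum_pi_prod (fun j m => p ^ (-(((m : ℝ) + 1) * M (toRn (k j)))))
      (fun j => 1 / (p ^ (M (toRn (k j))) - 1))
      (fun j => geom_real p (M (toRn (k j))) hp (hM j))
  have hGW := hasSum_mul_pair
    (f := fun h : ↥H => p ^ (M (fun i => ((h : Fin n → ℤ) i : ℝ))))
    (g := fun mm : Fin r → ℕ => ∏ j, p ^ (-(((mm j : ℝ) + 1) * M (toRn (k j))))) hG hW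
  -- transport along the bijection
  let e := Equiv.ofBijective e0 ⟨hinj, hsurj⟩
  have hcomp : ((fun k' : {k' : Fin n → ℕ // toRn k' ∈ δ} => p ^ (-(M (toRn k'.1)))) ∘ e) =
      fun x : ↥H × (Fin r → ℕ) =>
        p ^ (M (fun i => ((x.1 : Fin n → ℤ) i : ℝ))) *
          ∏ j, p ^ (-(((x.2 j : ℝ) + 1) * M (toRn (k j)))) := by
    funext x
    have hMv : M (toRn (F x)) = (∑ j, ((x.2 j : ℝ) + 1) * M (toRn (k j))) -
        M (fun i => ((x.1 : Fin n → ℤ) i : ℝ)) := by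
      rw [hFvec x, map_sub, map_sum]
      congr 1
      apply Finset.sum_congr rfl
      intro j _
      rw [map_smul, smul_eq_mul]
    show p ^ (-(M (toRn (F x)))) = _
    rw [hMv, neg_sub]
    have hsplit : M (fun i => ((x.1 : Fin n → ℤ) i : ℝ)) -
        (∑ j, ((x.2 j : ℝ) + 1) * M (toRn (k j))) =
        M (fun i => ((x.1 : Fin n → ℤ) i : ℝ)) +
        (∑ j, (-(((x.2 j : ℝ) + 1) * M (toRn (k j))))) := by
      rw [Finset.sum_neg_distrib]
      ring
    rw [hsplit, Real.rpow_add hp0, rpow_finset_sum p hp0]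
  have hfinal : HasSum (fun k' : {k' : Fin n → ℕ // toRn k' ∈ δ} => p ^ (-(M (toRn k'.1))))
      ((∑' h : ↥H, p ^ (M (fun i => ((h : Fin n → ℤ) i : ℝ)))) *
        ∏ j, 1 / (p ^ (M (toRn (k j))) - 1)) := by
    rw [← e.hasSum_iff]
    rw [hcomp]
    exact hGW
  have hWval : (∏ j, 1 / (p ^ (M (toRn (k j))) - 1)) =
      (∏ j, (p ^ (M (toRn (k j))) - 1))⁻¹ := by
    rw [← Finset.prod_inv_distrib]
    simp [one_div]
  rw [div_eq_mul_inv, ← hWval]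
  exact hfinal
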